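/- arXiv:2405.11516 — 2 statements merged into one kernel-verified Lean document; each statement's English description precedes it below -/
import Mathlib

section
/- Let F be a continuous function on the torus T^n and let \xi in R^n be non-resonant (\kappa \cdot \xi \ne 0 for all nonzero \kappa in Z^n). Then the time average (1/T) \int_0^T F(\xi x) dx converges as T -> +\infty to the space average \int_{T^n} F(y) dy. -/
open MeasureTheory Filter Real Complex

noncomputable section
namespace Weyl

variable {n : ℕ}

instance : Fact ((0:ℝ) < 1) := ⟨one_pos⟩

def q (n : ℕ) : (Fin n → ℝ) → (Fin n → AddCircle (1:ℝ)) :=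
  Pi.map (fun _ x => (x : AddCircle (1:ℝ)))

lemma isOpenQuotientMap_q : IsOpenQuotientMap (q n) :=
  IsOpenQuotientMap.piMap fun _ => QuotientAddGroup.isOpenQuotientMap_mk

lemma continuous_q : Continuous (q n) := isOpenQuotientMap_q.continuous

def E (κ : Fin n → ℤ) : C(Fin n → AddCircle (1:ℝ), ℂ) :=
  ∏ i : Fin n, ContinuousMap.comp (fourier (κ i)) ⟨fun y => y i, continuous_apply i⟩

lemma E_apply (κ : Fin n → ℤ) (y : Fin n → AddCircle (1:ℝ)) :
    E κ y = ∏ i, fourier (κ i) (y i) := by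
  simp [E]

lemma E_apply_q (κ : Fin n → ℤ) (x : Fin n → ℝ) :
    E κ (q n x) = Complex.exp ((2 * π * Complex.I) * ∑ i, (κ i : ℂ) * (x i)) := by
  rw [E_apply, Finset.mul_sum, Complex.exp_sum]
  refine Finset.prod_congr rfl fun i _ => ?_
  rw [q, Pi.map_apply, fourier_coe_apply]
  push_cast
  ring_nf

lemma E_mul (κ κ' : Fin n → ℤ) : E κ * E κ' = E (κ + κ') := by
  ext y
  simp only [ContinuousMap.mul_apply, E_apply, ← Finset.prod_mul_distrib]
  refine Finset.prod_congr rfl fun i _ => ?_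
  rw [Pi.add_apply, fourier_add]

lemma E_zero : E (0 : Fin n → ℤ) = 1 := by
  ext y; simp [E_apply, fourier_zero]

lemma E_star (κ : Fin n → ℤ) : star (E κ) = E (-κ) := by
  ext y
  simp only [ContinuousMap.star_apply, E_apply, starRingEnd_apply, star_prod]
  refine Finset.prod_congr rfl fun i _ => ?_
  rw [Pi.neg_apply, fourier_neg, starRingEnd_apply]

end Weyl

namespace Weyl
variable {n : ℕ}

def S (n : ℕ) : StarSubalgebra ℂ C(Fin n → AddCircle (1:ℝ), ℂ) where
  toSubalgebra := Submodule.toSubalgebra (Submodule.span ℂ (Set.range (E (n := n))))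
    (E_zero (n := n) ▸ Submodule.subset_span ⟨0, rfl⟩)
    (by
      intro f g hf hg
      induction hf using Submodule.span_induction with
      | mem x hx =>
        induction hg using Submodule.span_induction with
        | mem y hy =>
          obtain ⟨κ, rfl⟩ := hx; obtain ⟨κ', rfl⟩ := hy
          exact Submodule.subset_span ⟨κ + κ', (E_mul κ κ').symm⟩
        | zero => simp
        | add y z _ _ h1 h2 => rw [mul_add]; exact Submodule.add_mem _ h1 h2
        | smul c y _ h1 => rw [mul_smul_comm]; exact Submodule.smul_mem _ _ h1
      | zero => simp
      | add x y _ _ h1 h2 => rw [add_mul]; exact Submodule.add_mem _ h1 h2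
      | smul c x _ h1 => rw [smul_mul_assoc]; exact Submodule.smul_mem _ _ h1)
  star_mem' := by
    intro f hf
    induction hf using Submodule.span_induction with
    | mem x hx => obtain ⟨κ, rfl⟩ := hx; exact Submodule.subset_span ⟨-κ, (E_star κ).symm⟩
    | zero => simp
    | add x y _ _ h1 h2 => rw [star_add]; exact Submodule.add_mem _ h1 h2
    | smul c x _ h1 => rw [star_smul]; exact Submodule.smul_mem _ _ h1

lemma mem_S_iff (f : C(Fin n → AddCircle (1:ℝ), ℂ)) :
    f ∈ S n ↔ f ∈ Submodule.span ℂ (Set.range (E (n := n))) := Iff.rfl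

lemma S_separatesPoints : (S n).SeparatesPoints := by
  intro y z hyz
  obtain ⟨i, hi⟩ : ∃ i, y i ≠ z i := by
    by_contra h; push_neg at h; exact hyz (funext h)
  refine ⟨_, ⟨E (Pi.single i 1), Submodule.subset_span ⟨_, rfl⟩, rfl⟩, ?_⟩
  have key : ∀ w : Fin n → AddCircle (1:ℝ), E (Pi.single i 1) w = AddCircle.toCircle (w i) := by
    intro w
    rw [E_apply, Finset.prod_eq_single i (fun j _ hj => by
      rw [Pi.single_eq_of_ne hj]; exact fourier_zero) (fun h => absurd (Finset.mem_univ i) h)]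
    rw [Pi.single_eq_same, fourier_one]
  show (E (Pi.single i 1)) y ≠ (E (Pi.single i 1)) z
  rw [key, key]
  intro h
  exact hi (AddCircle.injective_toCircle one_ne_zero (Subtype.coe_injective h))

lemma S_closure_top : (S n).topologicalClosure = ⊤ :=
  ContinuousMap.starSubalgebra_topologicalClosure_eq_top_of_separatesPoints _ S_separatesPoints

end Weyl

namespace Weyl
variable {n : ℕ}

def Fbar (F : (Fin n → ℝ) → ℝ) : (Fin n → AddCircle (1:ℝ)) → ℝ :=
  fun y => F (fun i => ((AddCircle.equivIco 1 0 (y i) : Set.Ico (0:ℝ) (0+1)) : ℝ))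

lemma Fbar_q (F : (Fin n → ℝ) → ℝ)
    (hper : ∀ (k : Fin n → ℤ) (x : Fin n → ℝ), F (x + fun i => (k i : ℝ)) = F x)
    (x : Fin n → ℝ) : Fbar F (q n x) = F x := by
  have h : ∀ i, ∃ k : ℤ,
      ((AddCircle.equivIco 1 0 ((x i : AddCircle (1:ℝ))) : Set.Ico (0:ℝ) (0+1)) : ℝ)
        = x i + (k : ℝ) := by
    intro i
    have h1 : ((((AddCircle.equivIco 1 0 ((x i : AddCircle (1:ℝ)))) : Set.Ico (0:ℝ) (0+1)) : ℝ) : AddCircle (1:ℝ))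
        = (x i : AddCircle (1:ℝ)) := (AddCircle.equivIco 1 0).symm_apply_apply _
    rw [QuotientAddGroup.eq] at h1
    obtain ⟨k, hk⟩ := h1
    simp only [zsmul_eq_mul, mul_one] at hk
    exact ⟨-k, by push_cast; linarith [hk]⟩
  choose k hk using h
  have : (fun i => ((AddCircle.equivIco 1 0 ((q n x) i) : Set.Ico (0:ℝ) (0+1)) : ℝ))
      = x + fun i => ((k i : ℝ)) := by
    funext i; exact hk i
  rw [Fbar, this, hper]

lemma continuous_Fbar (F : (Fin n → ℝ) → ℝ) (hF : Continuous F)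
    (hper : ∀ (k : Fin n → ℤ) (x : Fin n → ℝ), F (x + fun i => (k i : ℝ)) = F x) :
    Continuous (Fbar F) := by
  rw [← isOpenQuotientMap_q.continuous_comp_iff]
  have : Fbar F ∘ q n = F := funext (Fbar_q F hper)
  rw [this]; exact hF

end Weyl

namespace Weyl
variable {n : ℕ}

def Φ (ξ : Fin n → ℝ) (g : C(Fin n → AddCircle (1:ℝ), ℂ)) (T : ℝ) : ℂ :=
  ((1/T : ℝ) : ℂ) * ∫ x in (0:ℝ)..T, g (q n (fun i => ξ i * x))

def Iℂ (g : C(Fin n → AddCircle (1:ℝ), ℂ)) : ℂ :=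
  ∫ y in Set.Icc (0 : Fin n → ℝ) 1, g (q n y)

lemma continuous_flow (ξ : Fin n → ℝ) (g : C(Fin n → AddCircle (1:ℝ), ℂ)) :
    Continuous (fun x : ℝ => g (q n (fun i => ξ i * x))) :=
  g.continuous.comp (continuous_q.comp (continuous_pi fun i =>
    continuous_const.mul continuous_id))

lemma tendsto_Φ_E (ξ : Fin n → ℝ) (κ : Fin n → ℤ) (hs : (∑ i, (κ i : ℝ) * ξ i) ≠ 0) :
    Filter.Tendsto (Φ ξ (E κ)) Filter.atTop (nhds 0) := by
  set s : ℝ := ∑ i, (κ i : ℝ) * ξ i with hs_def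
  set c : ℂ := ((2 * π * s : ℝ) : ℂ) * Complex.I with hc_def
  have hc : c ≠ 0 := by
    apply mul_ne_zero _ Complex.I_ne_zero
    simpa using mul_ne_zero (mul_ne_zero two_ne_zero Real.pi_ne_zero) hs
  have hint : ∀ t : ℝ, E κ (q n (fun i => ξ i * t)) = Complex.exp (c * t) := by
    intro t
    rw [E_apply_q]
    congr 1
    rw [hc_def, hs_def]
    push_cast
    simp only [Finset.mul_sum, Finset.sum_mul]
    exact Finset.sum_congr rfl fun i _ => by ring
  have key : ∀ T : ℝ, Φ ξ (E κ) T = ((1/T : ℝ) : ℂ) * ((Complex.exp (c * T) - 1) / c) := by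
    intro T
    rw [Φ]
    congr 1
    rw [intervalIntegral.integral_congr (g := fun x : ℝ => Complex.exp (c * x))
      (fun x _ => hint x), integral_exp_mul_complex hc]
    simp
  have hb : ∀ᶠ T in Filter.atTop, ‖Φ ξ (E κ) T‖ ≤ (1/T) * (2 / ‖c‖) := by
    filter_upwards [Filter.eventually_ge_atTop (1:ℝ)] with T hT
    have hT0 : (0:ℝ) < T := lt_of_lt_of_le one_pos hT
    rw [key, norm_mul]
    apply mul_le_mul
    · rw [Complex.norm_real, Real.norm_eq_abs, abs_of_pos (by positivity)]
    · rw [norm_div]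
      gcongr
      have h1 : ‖Complex.exp (c * T)‖ = 1 := by
        have : c * (T:ℂ) = ((2 * π * s * T : ℝ) : ℂ) * Complex.I := by
          rw [hc_def]; push_cast; ring
        rw [this, Complex.norm_exp_ofReal_mul_I]
      calc ‖Complex.exp (c * T) - 1‖ ≤ ‖Complex.exp (c * T)‖ + ‖(1:ℂ)‖ := norm_sub_le _ _
        _ = 2 := by rw [h1, norm_one]; norm_num
    · positivity
    · positivity
  have h0 : Filter.Tendsto (fun T : ℝ => (1/T) * (2 / ‖c‖)) Filter.atTop (nhds 0) := by
    have := (tendsto_inv_atTop_zero (𝕜 := ℝ)).mul_const (2 / ‖c‖)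
    rw [zero_mul] at this
    simpa [one_div] using this
  exact squeeze_zero_norm' hb h0

end Weyl

namespace Weyl
variable {n : ℕ}

lemma Iℂ_E (κ : Fin n → ℤ) (hκ : κ ≠ 0) : Iℂ (E κ) = 0 := by
  classical
  set f : Fin n → ℝ → ℂ := fun i t => Set.indicator (Set.Icc (0:ℝ) 1)
      (fun t => Complex.exp (((2 * π * (κ i : ℝ) : ℝ) : ℂ) * Complex.I * t)) t with hf_def
  have hEprod : ∀ y : Fin n → ℝ,
      E κ (q n y) = ∏ i, Complex.exp (((2 * π * (κ i : ℝ) : ℝ) : ℂ) * Complex.I * (y i)) := by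
    intro y
    rw [E_apply]
    refine Finset.prod_congr rfl fun i _ => ?_
    rw [q, Pi.map_apply, fourier_coe_apply]
    push_cast
    ring_nf
  have hEq : ∀ y : Fin n → ℝ,
      Set.indicator (Set.Icc (0 : Fin n → ℝ) 1) (fun y => E κ (q n y)) y = ∏ i, f i (y i) := by
    intro y
    by_cases hy : y ∈ Set.Icc (0 : Fin n → ℝ) 1
    · rw [Set.indicator_of_mem hy, hEprod]
      refine Finset.prod_congr rfl fun i _ => ?_
      exact (Set.indicator_of_mem (Set.mem_Icc.mpr ⟨hy.1 i, hy.2 i⟩)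
        (fun t : ℝ => Complex.exp (((2 * π * (κ i : ℝ) : ℝ) : ℂ) * Complex.I * t))).symm
    · rw [Set.indicator_of_notMem hy]
      obtain ⟨i, hi⟩ : ∃ i, y i ∉ Set.Icc (0:ℝ) 1 := by
        by_contra h
        push_neg at h
        exact hy ⟨fun i => (h i).1, fun i => (h i).2⟩
      refine (Finset.prod_eq_zero (Finset.mem_univ i) ?_).symm
      exact Set.indicator_of_notMem hi _
  rw [Iℂ, ← integral_indicator measurableSet_Icc]
  rw [show (Set.indicator (Set.Icc (0 : Fin n → ℝ) 1) fun y => (E κ) (q n y))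
      = fun y => ∏ i, f i (y i) from funext hEq]
  rw [MeasureTheory.integral_fintype_prod_volume_eq_prod (ι := Fin n) f]
  obtain ⟨i0, hi0⟩ := Function.ne_iff.mp hκ
  apply Finset.prod_eq_zero (Finset.mem_univ i0)
  set c : ℂ := ((2 * π * (κ i0 : ℝ) : ℝ) : ℂ) * Complex.I with hc_def
  have hc : c ≠ 0 := by
    apply mul_ne_zero _ Complex.I_ne_zero
    have : (κ i0 : ℝ) ≠ 0 := Int.cast_ne_zero.mpr (by simpa using hi0)
    simpa using mul_ne_zero (mul_ne_zero two_ne_zero Real.pi_ne_zero) this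
  rw [hf_def]
  rw [integral_indicator measurableSet_Icc, integral_Icc_eq_integral_Ioc,
    ← intervalIntegral.integral_of_le zero_le_one, integral_exp_mul_complex hc]
  have hexp : Complex.exp (c * 1) = 1 := by
    have : c * 1 = (κ i0 : ℂ) * (2 * (π : ℂ) * Complex.I) := by
      rw [hc_def]; push_cast; ring
    rw [this, Complex.exp_int_mul_two_pi_mul_I]
  push_cast
  rw [hexp]
  simp

lemma Φ_one (ξ : Fin n → ℝ) (T : ℝ) (hT : T ≠ 0) : Φ ξ (E (0 : Fin n → ℤ)) T = 1 := by
  rw [Φ, E_zero]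
  simp only [ContinuousMap.one_apply, intervalIntegral.integral_const, sub_zero,
    Complex.real_smul, mul_one]
  rw [← Complex.ofReal_mul, one_div, inv_mul_cancel₀ hT]
  simp

lemma Iℂ_one : Iℂ (E (0 : Fin n → ℤ)) = 1 := by
  rw [Iℂ, E_zero]
  simp only [ContinuousMap.one_apply]
  rw [setIntegral_const, measureReal_def, Real.volume_Icc_pi]
  simp

end Weyl

namespace Weyl
variable {n : ℕ}

lemma integrableOn_torus (g : C(Fin n → AddCircle (1:ℝ), ℂ)) :
    IntegrableOn (fun y => g (q n y)) (Set.Icc (0 : Fin n → ℝ) 1) :=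
  (g.continuous.comp continuous_q).integrableOn_Icc

lemma tendsto_Φ_of_mem_span (ξ : Fin n → ℝ)
    (hnr : ∀ κ : Fin n → ℤ, κ ≠ 0 → (∑ i, (κ i : ℝ) * ξ i) ≠ 0)
    (g : C(Fin n → AddCircle (1:ℝ), ℂ)) (hg : g ∈ Submodule.span ℂ (Set.range (E (n := n)))) :
    Filter.Tendsto (Φ ξ g) Filter.atTop (nhds (Iℂ g)) := by
  induction hg using Submodule.span_induction with
  | mem g hg =>
    obtain ⟨κ, rfl⟩ := hg
    by_cases hκ : κ = 0
    · subst hκ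
      rw [Iℂ_one]
      apply Filter.Tendsto.congr' _ tendsto_const_nhds
      filter_upwards [Filter.eventually_ge_atTop (1:ℝ)] with T hT
      exact (Φ_one ξ T (by linarith)).symm
    · rw [Iℂ_E κ hκ]
      exact tendsto_Φ_E ξ κ (hnr κ hκ)
  | zero =>
    have h1 : Φ ξ (0 : C(Fin n → AddCircle (1:ℝ), ℂ)) = fun _ => 0 := by
      funext T; simp [Φ]
    have h2 : Iℂ (0 : C(Fin n → AddCircle (1:ℝ), ℂ)) = 0 := by simp [Iℂ]
    rw [h1, h2]; exact tendsto_const_nhds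
  | add g h hg hh ihg ihh =>
    have key : ∀ T, Φ ξ (g + h) T = Φ ξ g T + Φ ξ h T := by
      intro T
      simp only [Φ, ContinuousMap.add_apply]
      rw [intervalIntegral.integral_add ((continuous_flow ξ g).intervalIntegrable _ _)
        ((continuous_flow ξ h).intervalIntegrable _ _)]
      ring
    have keyI : Iℂ (g + h) = Iℂ g + Iℂ h := by
      simp only [Iℂ, ContinuousMap.add_apply]
      exact integral_add (integrableOn_torus g) (integrableOn_torus h)
    rw [keyI]
    exact (ihg.add ihh).congr (fun T => (key T).symm)
  | smul c g hg ihg =>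
    have key : ∀ T, Φ ξ (c • g) T = c * Φ ξ g T := by
      intro T
      simp only [Φ, ContinuousMap.smul_apply, smul_eq_mul]
      rw [intervalIntegral.integral_const_mul]
      ring
    have keyI : Iℂ (c • g) = c * Iℂ g := by
      simp only [Iℂ, ContinuousMap.smul_apply, smul_eq_mul]
      exact integral_const_mul c _
    rw [keyI]
    exact ((ihg.const_mul c)).congr (fun T => (key T).symm)

end Weyl

end

open Weyl

/-- For continuous `F` on the torus `𝕋^n` and non-resonant `ξ ∈ ℝ^n`, the time averages
`(1/T) ∫₀^T F(ξ x) dx` converge, as `T → ∞`, to the space average `∫_{𝕋^n} F`. -/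
theorem stmt4 {n : ℕ} (F : (Fin n → ℝ) → ℝ) (ξ : Fin n → ℝ)
    (hF : Continuous F)
    (hper : ∀ (k : Fin n → ℤ) (x : Fin n → ℝ), F (x + fun i => (k i : ℝ)) = F x)
    (hnr : ∀ κ : Fin n → ℤ, κ ≠ 0 → (∑ i, (κ i : ℝ) * ξ i) ≠ 0) :
    Filter.Tendsto (fun T : ℝ => (1/T) * ∫ x in (0:ℝ)..T, F (fun i => ξ i * x))
      Filter.atTop (nhds (∫ y in Set.Icc (0 : Fin n → ℝ) 1, F y)) := by
  classical
  set L : ℝ := ∫ y in Set.Icc (0 : Fin n → ℝ) 1, F y with hL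
  rw [Metric.tendsto_atTop]
  intro ε hε
  -- the lift of F to the torus
  set Fbarc : C(Fin n → AddCircle (1:ℝ), ℂ) :=
    ⟨fun y => ((Fbar F y : ℝ) : ℂ),
      Complex.continuous_ofReal.comp (continuous_Fbar F hF hper)⟩ with hFbarc
  -- Stone–Weierstrass approximation
  have hmem : Fbarc ∈ _root_.closure (S n : Set C(Fin n → AddCircle (1:ℝ), ℂ)) := by
    have h1 : Fbarc ∈ (S n).topologicalClosure := by
      rw [S_closure_top]; exact trivial
    exact h1
  obtain ⟨g, hgS, hgdist⟩ := Metric.mem_closure_iff.mp hmem (ε/4) (by positivity)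
  have hgspan : g ∈ Submodule.span ℂ (Set.range (E (n := n))) := hgS
  -- pointwise approximation on ℝ^n
  have hpt : ∀ x : Fin n → ℝ, ‖g (q n x) - ((F x : ℝ) : ℂ)‖ ≤ ε/4 := by
    intro x
    have h1 : dist (Fbarc (q n x)) (g (q n x)) ≤ dist Fbarc g :=
      ContinuousMap.dist_apply_le_dist _
    have h2 : Fbarc (q n x) = ((F x : ℝ) : ℂ) := by
      simp only [hFbarc, ContinuousMap.coe_mk, Fbar_q F hper x]
    rw [h2, dist_eq_norm, norm_sub_rev] at h1
    exact h1.trans (le_of_lt hgdist)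
  -- convergence for g
  have hP := tendsto_Φ_of_mem_span ξ hnr g hgspan
  obtain ⟨N₁, hN₁⟩ := Metric.tendsto_atTop.mp hP (ε/4) (by positivity)
  refine ⟨max N₁ 1, fun T hT => ?_⟩
  have hT1 : (1:ℝ) ≤ T := le_trans (le_max_right _ _) hT
  have hT0 : (0:ℝ) < T := lt_of_lt_of_le one_pos hT1
  have hTN : N₁ ≤ T := le_trans (le_max_left _ _) hT
  -- three-term estimate
  have claim2 : |(Φ ξ g T).re - (Iℂ g).re| < ε/4 := by
    have := hN₁ T hTN
    rw [dist_eq_norm] at this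
    calc |(Φ ξ g T).re - (Iℂ g).re| = |(Φ ξ g T - Iℂ g).re| := by rw [Complex.sub_re]
      _ ≤ ‖Φ ξ g T - Iℂ g‖ := Complex.abs_re_le_norm _
      _ < ε/4 := this
  have claim1 : |(1/T) * (∫ x in (0:ℝ)..T, F (fun i => ξ i * x)) - (Φ ξ g T).re| ≤ ε/4 := by
    have hcont : Continuous (fun x : ℝ => F (fun i => ξ i * x)) :=
      hF.comp (continuous_pi fun i => continuous_const.mul continuous_id)
    have hre : (Φ ξ g T).re
        = (1/T) * ∫ x in (0:ℝ)..T, (g (q n (fun i => ξ i * x))).re := by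
      have h := Complex.reCLM.intervalIntegral_comp_comm
        ((continuous_flow ξ g).intervalIntegrable (μ := volume) 0 T)
      simp only [Complex.reCLM_apply] at h
      rw [Φ, Complex.re_ofReal_mul, ← h]
    have hsub := intervalIntegral.integral_sub (μ := volume) (a := 0) (b := T)
      (f := fun x : ℝ => F (fun i => ξ i * x))
      (g := fun x : ℝ => (g (q n fun i => ξ i * x)).re)
      (hcont.intervalIntegrable _ _)
      ((Complex.continuous_re.comp (continuous_flow ξ g)).intervalIntegrable _ _)
    rw [hre, ← mul_sub, ← hsub, abs_mul]
    have hbound : |∫ x in (0:ℝ)..T,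
        (F (fun i => ξ i * x) - (g (q n (fun i => ξ i * x))).re)| ≤ (ε/4) * |T - 0| := by
      rw [← Real.norm_eq_abs]
      apply intervalIntegral.norm_integral_le_of_norm_le_const
      intro x _
      rw [Real.norm_eq_abs]
      have := hpt (fun i => ξ i * x)
      calc |F (fun i => ξ i * x) - (g (q n (fun i => ξ i * x))).re|
          = |(((F (fun i => ξ i * x) : ℝ) : ℂ) - g (q n (fun i => ξ i * x))).re| := by
            rw [Complex.sub_re, Complex.ofReal_re]
        _ ≤ ‖((F (fun i => ξ i * x) : ℝ) : ℂ) - g (q n (fun i => ξ i * x))‖ :=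
            Complex.abs_re_le_norm _
        _ ≤ ε/4 := by rw [norm_sub_rev]; exact this
    calc |1/T| * |∫ x in (0:ℝ)..T, (F (fun i => ξ i * x) - (g (q n (fun i => ξ i * x))).re)|
        ≤ |1/T| * ((ε/4) * |T - 0|) := by
          apply mul_le_mul_of_nonneg_left hbound (abs_nonneg _)
      _ = ε/4 := by
          rw [sub_zero, abs_of_pos hT0, abs_of_pos (by positivity : (0:ℝ) < 1/T)]
          field_simp
  have claim3 : |(Iℂ g).re - L| ≤ ε/4 := by
    have hFc : IntegrableOn (fun y => ((F y : ℝ) : ℂ)) (Set.Icc (0 : Fin n → ℝ) 1) :=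
      (Complex.continuous_ofReal.comp hF).integrableOn_Icc
    have hLc : (∫ y in Set.Icc (0 : Fin n → ℝ) 1, ((F y : ℝ) : ℂ)) = ((L : ℝ) : ℂ) := by
      rw [hL]; exact integral_ofReal
    have hsub : Iℂ g - ((L : ℝ) : ℂ)
        = ∫ y in Set.Icc (0 : Fin n → ℝ) 1, (g (q n y) - ((F y : ℝ) : ℂ)) := by
      rw [Iℂ, ← hLc, integral_sub (integrableOn_torus g) hFc]
    have hnorm : ‖Iℂ g - ((L : ℝ) : ℂ)‖ ≤ (ε/4) * (volume (Set.Icc (0 : Fin n → ℝ) 1)).toReal := by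
      rw [hsub]
      apply norm_setIntegral_le_of_norm_le_const
      · rw [Real.volume_Icc_pi]
        simp
      · intro y _
        exact hpt y
    have hvol : (volume (Set.Icc (0 : Fin n → ℝ) 1)).toReal = 1 := by
      rw [Real.volume_Icc_pi]; simp
    rw [hvol, mul_one] at hnorm
    calc |(Iℂ g).re - L| = |(Iℂ g - ((L:ℝ):ℂ)).re| := by
          rw [Complex.sub_re, Complex.ofReal_re]
      _ ≤ ‖Iℂ g - ((L:ℝ):ℂ)‖ := Complex.abs_re_le_norm _
      _ ≤ ε/4 := hnorm
  rw [Real.dist_eq]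
  calc |(1/T) * (∫ x in (0:ℝ)..T, F (fun i => ξ i * x)) - L|
      ≤ |(1/T) * (∫ x in (0:ℝ)..T, F (fun i => ξ i * x)) - (Φ ξ g T).re|
        + |(Φ ξ g T).re - L| := abs_sub_le _ _ _
    _ ≤ |(1/T) * (∫ x in (0:ℝ)..T, F (fun i => ξ i * x)) - (Φ ξ g T).re|
        + (|(Φ ξ g T).re - (Iℂ g).re| + |(Iℂ g).re - L|) := by
          gcongr
          exact abs_sub_le _ _ _
    _ < ε/4 + (ε/4 + ε/4) := by
          apply add_lt_add_of_le_of_lt claim1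
          apply add_lt_add_of_lt_of_le claim2 claim3
    _ < ε := by linarith
end

section
/- Let U in C(T^n) with U \ge 0, min U = 0, and \phi(\mu) = \int_{T^n} (2(\mu + U(y)))^{1/2} dy. If \int_{T^n} U(y)^{-1/2} dy = +\infty, then \lim_{\mu -> 0^+} (\phi(\mu) - \phi(0))/\mu = +\infty; consequently the inverse function \bar{H} of \phi satisfies \bar{H}'_+(p_0) = 0 where p_0 = \phi(0). -/
open MeasureTheory Set Filter Topology
open scoped ENNReal

/-- `φ(μ) = ∫_{𝕋^n} √(2(μ + U(y))) dy`. -/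
noncomputable def phiU {n : ℕ} (U : (Fin n → ℝ) → ℝ) (μ : ℝ) : ℝ :=
  ∫ y in Set.Icc (0 : Fin n → ℝ) 1, Real.sqrt (2 * (μ + U y))

section Aux

variable {n : ℕ} (U : (Fin n → ℝ) → ℝ)

/-- The quotient function `g μ y = 2 / (√(2(μ+U y)) + √(2 U y))`. -/
noncomputable def gU (μ : ℝ) (y : Fin n → ℝ) : ℝ :=
  2 / (Real.sqrt (2 * (μ + U y)) + Real.sqrt (2 * U y))

lemma volS : volume (Icc (0 : Fin n → ℝ) 1) = 1 := by
  rw [Real.volume_Icc_pi]; simp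

variable {U}

lemma denom_pos (hU0 : ∀ y, 0 ≤ U y) {μ : ℝ} (hμ : 0 < μ) (y : Fin n → ℝ) :
    0 < Real.sqrt (2 * (μ + U y)) + Real.sqrt (2 * U y) := by
  have h1 : 0 < Real.sqrt (2 * (μ + U y)) := Real.sqrt_pos.2 (by nlinarith [hU0 y])
  have h2 := Real.sqrt_nonneg (2 * U y)
  linarith

lemma cont_sqrt (hU : Continuous U) (μ : ℝ) :
    Continuous fun y : Fin n → ℝ => Real.sqrt (2 * (μ + U y)) := by fun_prop

lemma int_sqrt (hU : Continuous U) (μ : ℝ) :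
    IntegrableOn (fun y => Real.sqrt (2 * (μ + U y))) (Icc (0 : Fin n → ℝ) 1) volume :=
  (cont_sqrt hU μ).continuousOn.integrableOn_compact isCompact_Icc

lemma cont_g (hU : Continuous U) (hU0 : ∀ y, 0 ≤ U y) {μ : ℝ} (hμ : 0 < μ) :
    Continuous (gU U μ) := by
  apply continuous_const.div (by fun_prop)
  exact fun y => (denom_pos hU0 hμ y).ne'

lemma int_g (hU : Continuous U) (hU0 : ∀ y, 0 ≤ U y) {μ : ℝ} (hμ : 0 < μ) :
    IntegrableOn (gU U μ) (Icc (0 : Fin n → ℝ) 1) volume :=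
  (cont_g hU hU0 hμ).continuousOn.integrableOn_compact isCompact_Icc

lemma g_nonneg (hU0 : ∀ y, 0 ≤ U y) {μ : ℝ} (hμ : 0 < μ) (y : Fin n → ℝ) :
    0 ≤ gU U μ y := le_of_lt (div_pos two_pos (denom_pos hU0 hμ y))

lemma g_anti (hU0 : ∀ y, 0 ≤ U y) {μ μ' : ℝ} (h0 : 0 < μ) (h : μ ≤ μ') (y : Fin n → ℝ) :
    gU U μ' y ≤ gU U μ y := by
  unfold gU
  have hd := denom_pos hU0 h0 y
  gcongr

lemma sqrt_diff_eq {μ u : ℝ} (hμ : 0 < μ) (hu : 0 ≤ u) :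
    Real.sqrt (2 * (μ + u)) - Real.sqrt (2 * u)
      = μ * (2 / (Real.sqrt (2 * (μ + u)) + Real.sqrt (2 * u))) := by
  have ha2 : Real.sqrt (2 * (μ + u)) ^ 2 = 2 * (μ + u) := Real.sq_sqrt (by linarith)
  have hb2 : Real.sqrt (2 * u) ^ 2 = 2 * u := Real.sq_sqrt (by linarith)
  have h1 : 0 < Real.sqrt (2 * (μ + u)) := Real.sqrt_pos.2 (by linarith)
  have h2 := Real.sqrt_nonneg (2 * u)
  have hab : Real.sqrt (2 * (μ + u)) + Real.sqrt (2 * u) ≠ 0 := by positivity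
  rw [← mul_div_assoc, eq_div_iff hab]
  nlinarith [ha2, hb2]

lemma phi_diff (hU : Continuous U) (hU0 : ∀ y, 0 ≤ U y) {μ : ℝ} (hμ : 0 < μ) :
    phiU U μ - phiU U 0 = μ * ∫ y in Icc (0 : Fin n → ℝ) 1, gU U μ y := by
  have h0 : phiU U 0 = ∫ y in Icc (0 : Fin n → ℝ) 1, Real.sqrt (2 * U y) := by
    unfold phiU; simp only [zero_add]
  rw [phiU, h0, ← integral_sub (int_sqrt hU μ) (by have := int_sqrt hU 0; simp only [zero_add] at this; exact this),
    ← integral_const_mul]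
  refine integral_congr_ae (.of_forall fun y => ?_)
  exact sqrt_diff_eq hμ (hU0 y)

lemma integral_g_pos (hU : Continuous U) (hU0 : ∀ y, 0 ≤ U y) {ε : ℝ} (hε : 0 < ε) :
    0 < ∫ y in Icc (0 : Fin n → ℝ) 1, gU U ε y := by
  obtain ⟨y₀, hy₀, hC⟩ := isCompact_Icc.exists_isMaxOn
    ⟨(0 : Fin n → ℝ), Set.mem_Icc.2 ⟨le_rfl, fun i => zero_le_one⟩⟩ hU.continuousOn
  set C := U y₀ with hCdef
  have hC0 : 0 ≤ C := hU0 y₀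
  have hcpos : 0 < 2 / (Real.sqrt (2 * (ε + C)) + Real.sqrt (2 * C)) :=
    div_pos two_pos (denom_pos (fun _ => hC0) hε y₀)
  have hconst := setIntegral_const (μ := volume) (s := Icc (0 : Fin n → ℝ) 1)
    (2 / (Real.sqrt (2 * (ε + C)) + Real.sqrt (2 * C)))
  rw [measureReal_def, volS] at hconst
  simp only [ENNReal.toReal_one, one_smul] at hconst
  have hle : (2 / (Real.sqrt (2 * (ε + C)) + Real.sqrt (2 * C)))
      ≤ ∫ y in Icc (0 : Fin n → ℝ) 1, gU U ε y := by
    rw [← hconst]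
    refine setIntegral_mono_on ?_ (int_g hU hU0 hε) measurableSet_Icc ?_
    · exact integrableOn_const (by rw [volS]; exact ENNReal.one_ne_top)
    · intro y hy
      unfold gU
      have hd := denom_pos hU0 hε y
      have hUy : U y ≤ C := hC hy
      gcongr
  exact lt_of_lt_of_le hcpos hle

lemma phi_lt (hU : Continuous U) (hU0 : ∀ y, 0 ≤ U y) {ε : ℝ} (hε : 0 < ε) :
    phiU U 0 < phiU U ε := by
  have h := phi_diff hU hU0 hε
  nlinarith [integral_g_pos hU hU0 hε]

lemma phi_mono (hU : Continuous U) : Monotone (phiU U) := by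
  intro a b hab
  exact setIntegral_mono_on (int_sqrt hU a) (int_sqrt hU b) measurableSet_Icc
    fun y hy => Real.sqrt_le_sqrt (by nlinarith)

lemma phi_cont (hU : Continuous U) (hU0 : ∀ y, 0 ≤ U y) : Continuous (phiU U) := by
  rw [continuous_iff_continuousAt]
  intro μ₀
  apply MeasureTheory.continuousAt_of_dominated
    (bound := fun y => Real.sqrt (2 * (|μ₀| + 1 + U y)))
  · exact .of_forall fun μ => ((cont_sqrt hU μ).aestronglyMeasurable)
  · filter_upwards [Ioo_mem_nhds (sub_one_lt μ₀) (lt_add_one μ₀)] with μ hμ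
    refine .of_forall fun y => ?_
    rw [Real.norm_eq_abs, abs_of_nonneg (Real.sqrt_nonneg _)]
    refine Real.sqrt_le_sqrt ?_
    have := le_abs_self μ₀
    nlinarith [hμ.2]
  · exact (cont_sqrt hU _).continuousOn.integrableOn_compact isCompact_Icc
  · exact .of_forall fun y => Continuous.continuousAt (by fun_prop)

lemma exists_big (hU : Continuous U) (hU0 : ∀ y, 0 ≤ U y)
    (hdiv : ¬ IntegrableOn (fun y => (U y) ^ (-(1:ℝ)/2))
      (Set.Icc (0 : Fin n → ℝ) 1) volume) (M : ℝ) :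
    ∃ μ : ℝ, 0 < μ ∧ M ≤ ∫ y in Icc (0 : Fin n → ℝ) 1, gU U μ y := by
  by_contra hcon
  push_neg at hcon
  have hμk : ∀ k : ℕ, (0:ℝ) < 1 / (k + 1) := fun k => by positivity
  set f : ℕ → (Fin n → ℝ) → ℝ≥0∞ := fun k y => ENNReal.ofReal (gU U (1 / (k + 1)) y) with hf
  have hmeas : ∀ k, Measurable (f k) := fun k =>
    ENNReal.measurable_ofReal.comp (cont_g hU hU0 (hμk k)).measurable
  have hmono : Monotone f := by
    intro k l hkl y
    refine ENNReal.ofReal_le_ofReal (g_anti hU0 (hμk l) ?_ y)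
    have : (k : ℝ) + 1 ≤ (l : ℝ) + 1 := by exact_mod_cast Nat.succ_le_succ hkl
    exact one_div_le_one_div_of_le (by positivity) this
  have hbound : ∀ k, (∫⁻ y in Icc (0 : Fin n → ℝ) 1, f k y) ≤ ENNReal.ofReal M := by
    intro k
    rw [hf]
    rw [← ofReal_integral_eq_lintegral_ofReal (int_g hU hU0 (hμk k))
      (.of_forall fun y => g_nonneg hU0 (hμk k) y)]
    exact ENNReal.ofReal_le_ofReal (hcon _ (hμk k)).le
  have hsup : (∫⁻ y in Icc (0 : Fin n → ℝ) 1, ⨆ k, f k y) ≤ ENNReal.ofReal M := by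
    rw [lintegral_iSup hmeas hmono]; exact iSup_le hbound
  -- pointwise lower bound
  have hlow : ∀ y, ENNReal.ofReal ((Real.sqrt 2)⁻¹ * (U y) ^ (-(1:ℝ)/2)) ≤ ⨆ k, f k y := by
    intro y
    rcases eq_or_lt_of_le (hU0 y) with h0 | h0
    · rw [← h0, Real.zero_rpow (by norm_num : (-(1:ℝ)/2) ≠ 0)]
      simp
    · set u := U y with hu
      have hden : Tendsto
          (fun k : ℕ => Real.sqrt (2 * (1 / (k + 1) + u)) + Real.sqrt (2 * u)) atTop
          (𝓝 (Real.sqrt (2 * (0 + u)) + Real.sqrt (2 * u))) := by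
        refine Tendsto.add ?_ tendsto_const_nhds
        exact (Real.continuous_sqrt.tendsto _).comp
          ((tendsto_one_div_add_atTop_nhds_zero_nat.add tendsto_const_nhds).const_mul 2)
      have hdne : Real.sqrt (2 * (0 + u)) + Real.sqrt (2 * u) ≠ 0 := by
        have : 0 < Real.sqrt (2 * (0 + u)) := Real.sqrt_pos.2 (by nlinarith)
        have := Real.sqrt_nonneg (2 * u)
        positivity
      have hlim : Tendsto (fun k : ℕ => gU U (1 / (k + 1)) y) atTop
          (𝓝 (2 / (Real.sqrt (2 * (0 + u)) + Real.sqrt (2 * u)))) :=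
        tendsto_const_nhds.div hden hdne
      have hval : 2 / (Real.sqrt (2 * (0 + u)) + Real.sqrt (2 * u))
          = (Real.sqrt 2)⁻¹ * u ^ (-(1:ℝ)/2) := by
        have h2 : Real.sqrt (2 * u) = Real.sqrt 2 * Real.sqrt u :=
          Real.sqrt_mul (by norm_num) u
        have he : (-(1:ℝ)/2) = -(1/2 : ℝ) := by norm_num
        rw [zero_add, h2, he, Real.rpow_neg h0.le, ← Real.sqrt_eq_rpow]
        have hs2 : 0 < Real.sqrt 2 := Real.sqrt_pos.2 (by norm_num)
        have hsu : 0 < Real.sqrt u := Real.sqrt_pos.2 h0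
        field_simp
        ring
      rw [← hval]
      exact le_of_tendsto' ((ENNReal.continuous_ofReal.tendsto _).comp hlim)
        (fun k => le_iSup (fun k => f k y) k)
  -- divergence of the lower bound integral
  have hmeas2 : Measurable fun y => (U y) ^ (-(1:ℝ)/2) := by fun_prop
  have hne : (∫⁻ y in Icc (0 : Fin n → ℝ) 1, ENNReal.ofReal ((U y) ^ (-(1:ℝ)/2))) = ⊤ := by
    by_contra hne
    apply hdiv
    refine ⟨hmeas2.aestronglyMeasurable, ?_⟩
    rw [hasFiniteIntegral_iff_ofReal (.of_forall fun y => Real.rpow_nonneg (hU0 y) _)]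
    exact lt_top_iff_ne_top.2 hne
  have hlint : (∫⁻ y in Icc (0 : Fin n → ℝ) 1,
      ENNReal.ofReal ((Real.sqrt 2)⁻¹ * (U y) ^ (-(1:ℝ)/2))) = ⊤ := by
    have hrw : ∀ y : Fin n → ℝ, ENNReal.ofReal ((Real.sqrt 2)⁻¹ * (U y) ^ (-(1:ℝ)/2))
        = ENNReal.ofReal ((Real.sqrt 2)⁻¹) * ENNReal.ofReal ((U y) ^ (-(1:ℝ)/2)) :=
      fun y => ENNReal.ofReal_mul (by positivity)
    simp only [hrw]
    rw [lintegral_const_mul _ hmeas2.ennreal_ofReal, hne, ENNReal.mul_top]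
    simp only [ne_eq, ENNReal.ofReal_eq_zero, not_le]
    positivity
  have := le_trans (le_trans hlint.ge (lintegral_mono hlow)) hsup
  exact ENNReal.ofReal_ne_top (top_le_iff.1 this)

lemma part1 (hU : Continuous U) (hU0 : ∀ y, 0 ≤ U y)
    (hdiv : ¬ IntegrableOn (fun y => (U y) ^ (-(1:ℝ)/2))
      (Set.Icc (0 : Fin n → ℝ) 1) volume) :
    Tendsto (fun μ => (phiU U μ - phiU U 0) / μ) (𝓝[>] (0:ℝ)) atTop := by
  rw [tendsto_atTop]
  intro M
  obtain ⟨μ₀, hμ₀, hM⟩ := exists_big hU hU0 hdiv M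
  filter_upwards [Ioo_mem_nhdsGT hμ₀] with μ hμ
  rw [phi_diff hU hU0 hμ.1, mul_comm, mul_div_assoc, div_self (ne_of_gt hμ.1), mul_one]
  refine le_trans hM (setIntegral_mono_on (int_g hU hU0 hμ₀) (int_g hU hU0 hμ.1)
    measurableSet_Icc fun y hy => g_anti hU0 hμ.1 hμ.2.le y)

end Aux

/-- If `∫_{𝕋^n} U^{-1/2} = +∞`, then `(φ(μ) - φ(0))/μ → +∞` as `μ → 0⁺`; consequently the
inverse function `H̄` of `φ` has vanishing right derivative at `p₀ = φ(0)`. -/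
theorem stmt13 {n : ℕ} (U : (Fin n → ℝ) → ℝ) (hU : Continuous U)
    (hper : ∀ (k : Fin n → ℤ) (x : Fin n → ℝ), U (x + fun i => (k i : ℝ)) = U x)
    (hU0 : ∀ y, 0 ≤ U y) (hmin : ∃ y, U y = 0)
    (hdiv : ¬ IntegrableOn (fun y => (U y) ^ (-(1:ℝ)/2))
      (Set.Icc (0 : Fin n → ℝ) 1) volume) :
    Filter.Tendsto (fun μ => (phiU U μ - phiU U 0) / μ)
      (nhdsWithin 0 (Set.Ioi 0)) Filter.atTop ∧
    ∀ Hbar : ℝ → ℝ, (∀ μ ≥ (0:ℝ), Hbar (phiU U μ) = μ) →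
      Filter.Tendsto (fun p => (Hbar p - Hbar (phiU U 0)) / (p - phiU U 0))
        (nhdsWithin (phiU U 0) (Set.Ioi (phiU U 0))) (nhds 0) := by
  have h1 := part1 hU hU0 hdiv
  refine ⟨h1, ?_⟩
  intro Hbar hHbar
  have hHp0 : Hbar (phiU U 0) = 0 := hHbar 0 le_rfl
  -- key eventual fact
  have key : ∀ ε : ℝ, 0 < ε → ∀ᶠ p in 𝓝[>] (phiU U 0),
      0 < Hbar p ∧ Hbar p ≤ ε ∧ phiU U (Hbar p) = p := by
    intro ε hε
    filter_upwards [Ioo_mem_nhdsGT (phi_lt hU hU0 hε)] with p hp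
    have hpmem : p ∈ Icc (phiU U 0) (phiU U ε) := ⟨hp.1.le, hp.2.le⟩
    obtain ⟨μ, hμmem, hμp⟩ := intermediate_value_Icc hε.le
      ((phi_cont hU hU0).continuousOn) hpmem
    have hμ0 : 0 < μ := by
      rcases lt_or_eq_of_le hμmem.1 with h | h
      · exact h
      · exfalso; rw [← h] at hμp; exact lt_irrefl p (hμp ▸ hp.1)
    have hH : Hbar p = μ := by rw [← hμp]; exact hHbar μ hμmem.1
    exact ⟨hH ▸ hμ0, hH ▸ hμmem.2, by rw [hH, hμp]⟩
  have htends : Tendsto Hbar (𝓝[>] (phiU U 0)) (𝓝[>] (0:ℝ)) := by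
    rw [tendsto_nhdsWithin_iff]
    constructor
    · rw [tendsto_order]
      constructor
      · intro a ha
        filter_upwards [key 1 one_pos] with p hp
        exact lt_trans ha hp.1
      · intro a ha
        filter_upwards [key (a/2) (half_pos ha)] with p hp
        exact lt_of_le_of_lt hp.2.1 (half_lt_self ha)
    · filter_upwards [key 1 one_pos] with p hp
      exact hp.1
  have hG : Tendsto (fun μ => μ / (phiU U μ - phiU U 0)) (𝓝[>] (0:ℝ)) (𝓝 0) := by
    have := h1.inv_tendsto_atTop
    refine this.congr fun μ => ?_
    simp [inv_div]
  have hcomp := hG.comp htends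
  refine hcomp.congr' ?_
  filter_upwards [key 1 one_pos] with p hp
  simp only [Function.comp_apply, hp.2.2, hHp0, sub_zero]
end
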